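/- Let M be a compact topological space, let f be a flow on M, let λ > 0, and let τ : M × [0,∞) → ℝ be continuous and satisfy the λ-cocycle identity. Then there exists a continuous function τ∞ : M → ℝ such that τ(·,T) converges uniformly on M to τ∞ as T → +∞, i.e. sup_{x ∈ M} |τ(x,T) − τ∞(x)| → 0 as T → +∞. -/

import Mathlib

open Filter Real Topology

/-- existence of a continuous uniform limit `τ∞` of `τ(·,T)` as `T → +∞`. -/
theorem stmt3 {M : Type*} [TopologicalSpace M] [CompactSpace M]
    (f : Flow ℝ M) (lam : ℝ) (hlam : 0 < lam)
    (τ : M → ℝ → ℝ) (hcont : Continuous fun p : M × ℝ => τ p.1 p.2)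
    (hcocycle : ∀ (x : M) (T₁ T₂ : ℝ), 0 ≤ T₁ → 0 ≤ T₂ →
      τ x (T₁ + T₂) = τ x T₁ + Real.exp (-lam * T₁) * τ (f T₁ x) T₂) :
    ∃ tauInf : M → ℝ, Continuous tauInf ∧
      TendstoUniformly (fun T : ℝ => fun x : M => τ x T) tauInf Filter.atTop := by
  -- A bound on |τ| on M × [0,1]
  obtain ⟨C, hC⟩ : ∃ C, ∀ (y : M) (S : ℝ), S ∈ Set.Icc (0:ℝ) 1 → |τ y S| ≤ C := by
    have hK : IsCompact ((Set.univ : Set M) ×ˢ Set.Icc (0:ℝ) 1) :=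
      isCompact_univ.prod isCompact_Icc
    obtain ⟨C, hC⟩ := hK.exists_bound_of_continuousOn hcont.continuousOn
    exact ⟨C, fun y S hS => by
      simpa [Real.norm_eq_abs] using hC (y, S) ⟨Set.mem_univ _, hS⟩⟩
  set C' : ℝ := max C 0 with hC'def
  have hC'0 : 0 ≤ C' := le_max_right _ _
  have hC1 : ∀ (y : M) (S : ℝ), 0 ≤ S → S ≤ 1 → |τ y S| ≤ C' :=
    fun y S h0 h1 => le_trans (hC y S ⟨h0, h1⟩) (le_max_left _ _)
  set e : ℝ := Real.exp (-lam) with hedef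
  have he0 : 0 < e := Real.exp_pos _
  have he1 : e < 1 := Real.exp_lt_one_iff.mpr (by linarith)
  set B : ℝ := C' / (1 - e) with hBdef
  have h1e : 0 < 1 - e := by linarith
  have hB0 : 0 ≤ B := div_nonneg hC'0 (le_of_lt h1e)
  have hC'B : C' ≤ B := by
    rw [hBdef, le_div_iff₀ h1e]; nlinarith
  -- τ y 0 = 0
  have hzero : ∀ x : M, τ x 0 = 0 := by
    intro x
    have := hcocycle x 0 0 le_rfl le_rfl
    simp at this
    linarith
  -- the uniform bound |τ y S| ≤ B for all S ≥ 0
  have hboundN : ∀ (n : ℕ) (y : M) (S : ℝ), 0 ≤ S → S ≤ n → |τ y S| ≤ B := by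
    intro n
    induction n with
    | zero =>
      intro y S h0 h1
      have : S = 0 := le_antisymm (by exact_mod_cast h1) h0
      simp [this, hzero, hB0]
    | succ n ih =>
      intro y S h0 h1
      by_cases hS1 : S ≤ 1
      · exact le_trans (hC1 y S h0 hS1) hC'B
      · push_neg at hS1
        have h0' : (0:ℝ) ≤ S - 1 := by linarith
        have h1' : S - 1 ≤ n := by
          have : S ≤ (n : ℝ) + 1 := by exact_mod_cast h1
          linarith
        have hco := hcocycle y 1 (S - 1) (by norm_num) h0'
        have hSeq : (1 : ℝ) + (S - 1) = S := by ring
        rw [hSeq] at hco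
        rw [hco]
        have h2 := ih (f 1 y) (S - 1) h0' h1'
        have h3 := hC1 y 1 (by norm_num) le_rfl
        have hexp : Real.exp (-lam * 1) = e := by rw [hedef]; ring_nf
        calc |τ y 1 + Real.exp (-lam * 1) * τ (f 1 y) (S - 1)|
            ≤ |τ y 1| + |Real.exp (-lam * 1) * τ (f 1 y) (S - 1)| := abs_add_le _ _
          _ = |τ y 1| + e * |τ (f 1 y) (S - 1)| := by
              rw [abs_mul, hexp, abs_of_pos he0]
          _ ≤ C' + e * B := by
              have := mul_le_mul_of_nonneg_left h2 (le_of_lt he0)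
              linarith
          _ ≤ B := le_of_eq (by rw [hBdef]; field_simp; ring)
  have hglob : ∀ (y : M) (S : ℝ), 0 ≤ S → |τ y S| ≤ B := by
    intro y S h0
    exact hboundN ⌈S⌉₊ y S h0 (Nat.le_ceil S)
  -- the Cauchy estimate
  have hdiff : ∀ (x : M) (T T' : ℝ), 0 ≤ T → T ≤ T' →
      |τ x T' - τ x T| ≤ B * Real.exp (-lam * T) := by
    intro x T T' hT hTT
    have hco := hcocycle x T (T' - T) hT (by linarith)
    have : T + (T' - T) = T' := by ring
    rw [this] at hco
    have : τ x T' - τ x T = Real.exp (-lam * T) * τ (f T x) (T' - T) := by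
      rw [hco]; ring
    rw [this, abs_mul, abs_of_pos (Real.exp_pos _)]
    calc Real.exp (-lam * T) * |τ (f T x) (T' - T)|
        ≤ Real.exp (-lam * T) * B :=
          mul_le_mul_of_nonneg_left (hglob _ _ (by linarith)) (le_of_lt (Real.exp_pos _))
      _ = B * Real.exp (-lam * T) := mul_comm _ _
  -- decay of the bound
  have hdecay : Tendsto (fun T : ℝ => B * Real.exp (-lam * T)) atTop (𝓝 0) := by
    have h1 : Tendsto (fun T : ℝ => Real.exp (-lam * T)) atTop (𝓝 0) := by
      have h2 : Tendsto (fun T : ℝ => lam * T) atTop atTop :=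
        tendsto_id.const_mul_atTop hlam
      have := Real.tendsto_exp_neg_atTop_nhds_zero.comp h2
      simpa [Function.comp_def, neg_mul] using this
    simpa using h1.const_mul B
  -- pointwise limits
  have hlim : ∀ x : M, ∃ a : ℝ, Tendsto (fun T => τ x T) atTop (𝓝 a) := by
    intro x
    apply cauchySeq_tendsto_of_complete
    rw [Metric.cauchySeq_iff']
    intro ε hε
    have hev : ∀ᶠ T : ℝ in atTop, B * Real.exp (-lam * T) < ε ∧ 0 ≤ T :=
      (hdecay.eventually (gt_mem_nhds hε)).and (eventually_ge_atTop 0)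
    obtain ⟨N, hN⟩ := hev.exists
    refine ⟨N, fun n hn => ?_⟩
    rw [Real.dist_eq]
    exact lt_of_le_of_lt (hdiff x N n hN.2 hn) hN.1
  choose tauInf htend using hlim
  -- closeness of the limit
  have hclose : ∀ (x : M) (T : ℝ), 0 ≤ T →
      dist (τ x T) (tauInf x) ≤ B * Real.exp (-lam * T) := by
    intro x T hT
    have h1 : Tendsto (fun T' => dist (τ x T) (τ x T')) atTop
        (𝓝 (dist (τ x T) (tauInf x))) := tendsto_const_nhds.dist (htend x)
    refine le_of_tendsto h1 ?_
    filter_upwards [eventually_ge_atTop T] with T' hT'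
    rw [Real.dist_eq, abs_sub_comm]
    exact hdiff x T T' hT hT'
  have huni : TendstoUniformly (fun T : ℝ => fun x : M => τ x T) tauInf atTop := by
    rw [Metric.tendstoUniformly_iff]
    intro ε hε
    have hev : ∀ᶠ T : ℝ in atTop, B * Real.exp (-lam * T) < ε ∧ 0 ≤ T :=
      (hdecay.eventually (gt_mem_nhds hε)).and (eventually_ge_atTop 0)
    filter_upwards [hev] with T hT x
    rw [dist_comm]
    exact lt_of_le_of_lt (hclose x T hT.2) hT.1
  refine ⟨tauInf, ?_, huni⟩
  exact huni.continuous ((Eventually.of_forall fun T =>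
    hcont.comp (continuous_id.prodMk continuous_const)).frequently)
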